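/- arXiv:1808.10114 — 5 statements merged into one kernel-verified Lean document; each statement's English description precedes it below -/
import Mathlib

section
/- Let A = ⊕_{n∈ℤ} A_n be a ℤ-graded ring, let R be a subring of A_0, and let I ⊆ A_1 and J ⊆ A_{-1} be additive subgroups such that RI ⊆ I, IR ⊆ I, RJ ⊆ J, JR ⊆ J, JI ⊆ R, and such that for any finite subset {j_1,…,j_m} ⊆ J there exists b ∈ IJ with j_l b = j_l for each 1 ≤ l ≤ m. Then IJ ∩ R ⊆ ann_R(I)^⊥, i.e. every element x ∈ IJ with x ∈ R satisfies xy = yx = 0 for all y ∈ ann_R(I). -/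
/-- The additive subgroup generated by products `x * y` with `x ∈ X`, `y ∈ Y`. -/
def subMul {A : Type*} [NonUnitalRing A] (X Y : AddSubgroup A) : AddSubgroup A :=
  AddSubgroup.closure {a | ∃ x ∈ X, ∃ y ∈ Y, a = x * y}

/-- `ann_R(I)`: the elements of `R` annihilating `I` on the left. -/
def annSet {A : Type*} [NonUnitalRing A] (R I : Set A) : Set A :=
  {r ∈ R | ∀ x ∈ I, r * x = 0}

/-- `ann_R(I)^⊥`: the elements of `R` annihilating `ann_R(I)` on both sides. -/
def perpSet {A : Type*} [NonUnitalRing A] (R I : Set A) : Set A :=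
  {r ∈ R | ∀ y ∈ annSet R I, r * y = 0 ∧ y * r = 0}

/-- Let `A = ⊕_{n∈ℤ} A_n` be a `ℤ`-graded ring, `R` a subring of `A_0`, and
`I ⊆ A_1`, `J ⊆ A_{-1}` additive subgroups with `RI ⊆ I`, `IR ⊆ I`, `RJ ⊆ J`,
`JR ⊆ J`, `JI ⊆ R`, and such that any finite subset of `J` admits a right
"local unit" from `IJ`.  Then `IJ ∩ R ⊆ ann_R(I)^⊥`. -/
theorem stmt0 {A : Type*} [NonUnitalRing A]
    (𝒜 : ℤ → AddSubgroup A)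
    (hdecomp : DirectSum.IsInternal 𝒜)
    (hgmul : ∀ m n : ℤ, ∀ x ∈ 𝒜 m, ∀ y ∈ 𝒜 n, x * y ∈ 𝒜 (m + n))
    (R : NonUnitalSubring A) (hR : (R : Set A) ⊆ (𝒜 0 : Set A))
    (I J : AddSubgroup A)
    (hI : (I : Set A) ⊆ (𝒜 1 : Set A))
    (hJ : (J : Set A) ⊆ (𝒜 (-1) : Set A))
    (hRI : ∀ r ∈ R, ∀ i ∈ I, r * i ∈ I)
    (hIR : ∀ i ∈ I, ∀ r ∈ R, i * r ∈ I)
    (hRJ : ∀ r ∈ R, ∀ j ∈ J, r * j ∈ J)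
    (hJR : ∀ j ∈ J, ∀ r ∈ R, j * r ∈ J)
    (hJI : ∀ j ∈ J, ∀ i ∈ I, j * i ∈ R)
    (hFSJ : ∀ s : Finset A, (↑s : Set A) ⊆ (J : Set A) →
      ∃ b ∈ subMul I J, ∀ j ∈ s, j * b = j) :
    (subMul I J : Set A) ∩ (R : Set A) ⊆ perpSet (R : Set A) (I : Set A) := by
  classical
  -- Lemma 1: y ∈ ann_R(I) kills every element of IJ on the left.
  have key1 : ∀ y ∈ annSet (R : Set A) (I : Set A), ∀ b ∈ subMul I J, y * b = 0 := by
    rintro y ⟨hyR, hyI⟩ b hb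
    induction hb using AddSubgroup.closure_induction with
    | mem a ha =>
      obtain ⟨i, hi, j, hj, rfl⟩ := ha
      rw [← mul_assoc, hyI i hi, zero_mul]
    | zero => exact mul_zero y
    | add a c _ _ ha hc => rw [mul_add, ha, hc, add_zero]
    | neg a _ ha => rw [mul_neg, ha, neg_zero]
  -- Lemma 2: IJ is stable under right multiplication by elements of R.
  have key2 : ∀ y ∈ (R : Set A), ∀ b ∈ subMul I J, b * y ∈ subMul I J := by
    intro y hy b hb
    induction hb using AddSubgroup.closure_induction with
    | mem a ha =>
      obtain ⟨i, hi, j, hj, rfl⟩ := ha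
      rw [mul_assoc]
      exact AddSubgroup.subset_closure ⟨i, hi, j * y, hJR j hj y hy, rfl⟩
    | zero => rw [zero_mul]; exact zero_mem _
    | add a c _ _ ha hc => rw [add_mul]; exact add_mem ha hc
    | neg a _ ha => rw [neg_mul]; exact neg_mem ha
  -- Lemma 3: every z ∈ IJ has a finite set s ⊆ J of "right coordinates":
  -- whenever j * b = j for all j ∈ s, we get z * b = z.
  have key3 : ∀ z ∈ subMul I J, ∃ s : Finset A, (↑s : Set A) ⊆ (J : Set A) ∧
      ∀ b : A, (∀ j ∈ s, j * b = j) → z * b = z := by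
    intro z hz
    induction hz using AddSubgroup.closure_induction with
    | mem a ha =>
      obtain ⟨i, hi, j, hj, rfl⟩ := ha
      refine ⟨{j}, by simpa using hj, fun b hb => ?_⟩
      rw [mul_assoc, hb j (Finset.mem_singleton_self j)]
    | zero => exact ⟨∅, by simp, fun b _ => zero_mul b⟩
    | add a c _ _ ha hc =>
      obtain ⟨s, hs, hsp⟩ := ha
      obtain ⟨t, ht, htp⟩ := hc
      refine ⟨s ∪ t, ?_, fun b hb => ?_⟩
      · intro j hj
        rcases Finset.mem_union.mp hj with h | h
        · exact hs h
        · exact ht h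
      · rw [add_mul, hsp b (fun j hj => hb j (Finset.mem_union_left _ hj)),
          htp b (fun j hj => hb j (Finset.mem_union_right _ hj))]
    | neg a _ ha =>
      obtain ⟨s, hs, hsp⟩ := ha
      exact ⟨s, hs, fun b hb => by rw [neg_mul, hsp b hb]⟩
  rintro x ⟨hxIJ, hxR⟩
  refine ⟨hxR, fun y hy => ⟨?_, key1 y hy x hxIJ⟩⟩
  -- x * y ∈ IJ
  have hxy : x * y ∈ subMul I J := key2 y hy.1 x hxIJ
  obtain ⟨s, hs, hsp⟩ := key3 (x * y) hxy
  obtain ⟨b, hb, hbp⟩ := hFSJ s hs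
  have h1 : x * y * b = x * y := hsp b hbp
  have h2 : y * b = 0 := key1 y hy b hb
  rw [← h1, mul_assoc, h2, mul_zero]
end

section
/- Let A = ⊕_{n∈ℤ} A_n be a ℤ-graded ring, let R be a subring of A_0, and let I ⊆ A_1 and J ⊆ A_{-1} be additive subgroups satisfying: (1) RI ⊆ I, IR ⊆ I, RJ ⊆ J, JR ⊆ J, JI ⊆ R; (2) for any finite subset {i_1,…,i_n} ⊆ I there exists a ∈ IJ with a i_l = i_l for each l, and for any finite subset {j_1,…,j_m} ⊆ J there exists b ∈ IJ with j_l b = j_l for each l; (3) for all r ∈ ann_R(I)^⊥ and a ∈ IJ, if (r−a)x = 0 for all x ∈ I then a ∈ R; (4) ann_R(I) ∩ ann_R(I)^⊥ = {0}. Then {r ∈ R : there exists a ∈ IJ such that rx = ax for all x ∈ I} ∩ ann_R(I)^⊥ = IJ ∩ R. -/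
/-- Let `A = ⊕_{n∈ℤ} A_n` be a `ℤ`-graded ring, `R` a subring of `A_0`, and
`I ⊆ A_1`, `J ⊆ A_{-1}` additive subgroups satisfying conditions (1)–(4) of
Theorem 3.1.  Then `Δ⁻¹(F_J(I)) ∩ ann_R(I)^⊥ = IJ ∩ R`, where the left-hand
set is `{r ∈ R : ∃ a ∈ IJ, r x = a x for all x ∈ I}`. -/
theorem stmt2 {A : Type*} [NonUnitalRing A]
    (𝒜 : ℤ → AddSubgroup A)
    (hdecomp : DirectSum.IsInternal 𝒜)
    (hgmul : ∀ m n : ℤ, ∀ x ∈ 𝒜 m, ∀ y ∈ 𝒜 n, x * y ∈ 𝒜 (m + n))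
    (R : NonUnitalSubring A) (hR : (R : Set A) ⊆ (𝒜 0 : Set A))
    (I J : AddSubgroup A)
    (hI : (I : Set A) ⊆ (𝒜 1 : Set A))
    (hJ : (J : Set A) ⊆ (𝒜 (-1) : Set A))
    -- Condition (1)
    (hRI : ∀ r ∈ R, ∀ i ∈ I, r * i ∈ I)
    (hIR : ∀ i ∈ I, ∀ r ∈ R, i * r ∈ I)
    (hRJ : ∀ r ∈ R, ∀ j ∈ J, r * j ∈ J)
    (hJR : ∀ j ∈ J, ∀ r ∈ R, j * r ∈ J)
    (hJI : ∀ j ∈ J, ∀ i ∈ I, j * i ∈ R)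
    -- Condition (2)
    (hFSI : ∀ s : Finset A, (↑s : Set A) ⊆ (I : Set A) →
      ∃ a ∈ subMul I J, ∀ i ∈ s, a * i = i)
    (hFSJ : ∀ s : Finset A, (↑s : Set A) ⊆ (J : Set A) →
      ∃ b ∈ subMul I J, ∀ j ∈ s, j * b = j)
    -- Condition (3)
    (hcond3 : ∀ r ∈ perpSet (R : Set A) (I : Set A), ∀ a ∈ subMul I J,
      (∀ x ∈ I, (r - a) * x = 0) → a ∈ R)
    -- Condition (4)
    (hcond4 : ∀ r : A, r ∈ annSet (R : Set A) (I : Set A) →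
      r ∈ perpSet (R : Set A) (I : Set A) → r = 0) :
    {r : A | r ∈ R ∧ ∃ a ∈ subMul I J, ∀ x ∈ I, r * x = a * x} ∩
        perpSet (R : Set A) (I : Set A) =
      (subMul I J : Set A) ∩ (R : Set A) := by
  -- y ∈ ann(I) left-multiplies subMul I J to 0
  have lem1 : ∀ y : A, (∀ x ∈ I, y * x = 0) → ∀ a ∈ subMul I J, y * a = 0 := by
    intro y hy a ha
    refine AddSubgroup.closure_induction ?_ ?_ ?_ ?_ ha
    · rintro z ⟨x, hx, j, hj, rfl⟩
      rw [← mul_assoc, hy x hx, zero_mul]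
    · exact mul_zero y
    · intro u v _ _ hu hv; rw [mul_add, hu, hv, add_zero]
    · intro u _ hu; rw [mul_neg, hu, neg_zero]
  -- y ∈ ann(I) ∩ R right-multiplies subMul I J to 0
  have lem2 : ∀ y : A, y ∈ R → (∀ x ∈ I, y * x = 0) → ∀ a ∈ subMul I J, a * y = 0 := by
    intro y hyR hy a ha
    refine AddSubgroup.closure_induction ?_ ?_ ?_ ?_ ha
    · rintro z ⟨x, hx, j, hj, rfl⟩
      have hjy : j * y ∈ J := hJR j hj y hyR
      obtain ⟨b, hb, hbJ⟩ := hFSJ {j * y} (by simpa using hjy)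
      have h1 : (j * y) * b = j * y := hbJ _ (Finset.mem_singleton_self _)
      have hz : ∀ u ∈ I, (x * (j * y)) * u = 0 := by
        intro u hu
        rw [mul_assoc, mul_assoc, hy u hu, mul_zero, mul_zero]
      calc x * j * y = x * (j * y) := mul_assoc x j y
        _ = x * ((j * y) * b) := by rw [h1]
        _ = (x * (j * y)) * b := (mul_assoc x (j * y) b).symm
        _ = 0 := lem1 _ hz b hb
    · exact zero_mul y
    · intro u v _ _ hu hv; rw [add_mul, hu, hv, add_zero]
    · intro u _ hu; rw [neg_mul, hu, neg_zero]
  ext r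
  simp only [Set.mem_inter_iff, Set.mem_setOf_eq]
  constructor
  · rintro ⟨⟨hrR, a, ha, hra⟩, hrP⟩
    have haR : a ∈ R := by
      refine hcond3 r hrP a ha ?_
      intro x hx; rw [sub_mul, hra x hx, sub_self]
    have hdR : r - a ∈ R := R.sub_mem hrR haR
    have hdann : r - a ∈ annSet (R : Set A) (I : Set A) := by
      refine ⟨hdR, fun x hx => ?_⟩
      rw [sub_mul, hra x hx, sub_self]
    have hd0 : r - a = 0 := by
      refine hcond4 _ hdann ⟨hdR, fun y hy => ?_⟩
      constructor
      · rw [sub_mul, (hrP.2 y hy).1, lem2 y hy.1 hy.2 a ha, sub_zero]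
      · rw [mul_sub, (hrP.2 y hy).2, lem1 y hy.2 a ha, sub_zero]
    have : r = a := sub_eq_zero.mp hd0
    exact ⟨this ▸ ha, hrR⟩
  · rintro ⟨haIJ, haR⟩
    refine ⟨⟨haR, r, haIJ, fun x _ => rfl⟩, haR, fun y hy => ?_⟩
    exact ⟨lem2 y hy.1 hy.2 r haIJ, lem1 y hy.2 r haIJ⟩
end

section
/- Let A = ⊕_{n∈ℤ} A_n be a strongly ℤ-graded ring with graded local units, let B = ⊕_{n∈ℤ} B_n be a ℤ-graded ring, and let φ : A → B be a graded ring homomorphism. If the restriction of φ to A_0 is injective, then φ is injective. -/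
set_option maxHeartbeats 1000000 in
set_option synthInstance.maxHeartbeats 400000 in
/-- Auxiliary: if a graded hom kills a finite sum of homogeneous elements,
it kills each homogeneous component. -/
theorem auxCompZero {A B : Type*} [NonUnitalRing A] [NonUnitalRing B]
    (𝒜 : ℤ → AddSubgroup A) (ℬ : ℤ → AddSubgroup B)
    (hBdecomp : DirectSum.IsInternal ℬ)
    (φ : A →ₙ+* B) (hgraded : ∀ n : ℤ, ∀ x ∈ 𝒜 n, φ x ∈ ℬ n)
    (f : DirectSum ℤ fun i => 𝒜 i)
    (hc : φ (DirectSum.coeAddMonoidHom 𝒜 f) = 0) :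
    ∀ n, φ (f n : A) = 0 := by
  classical
  let ψ : ∀ n : ℤ, 𝒜 n →+ ℬ n := fun n =>
    AddMonoidHom.mk' (fun x => ⟨φ x, hgraded n x x.2⟩)
      (fun x y => Subtype.ext (by simp))
  let Ψ : (DirectSum ℤ fun i => 𝒜 i) →+ DirectSum ℤ fun i => ℬ i :=
    DirectSum.toAddMonoid fun n => (DirectSum.of (fun i => ℬ i) n).comp (ψ n)
  have hΨof : ∀ (i : ℤ) (x : 𝒜 i),
      Ψ (DirectSum.of (fun i => 𝒜 i) i x) = DirectSum.of (fun i => ℬ i) i (ψ i x) :=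
    fun i x =>
      DirectSum.toAddMonoid_of (fun n => (DirectSum.of (fun i => ℬ i) n).comp (ψ n)) i x
  have hcomp : ∀ (g : DirectSum ℤ fun i => 𝒜 i) (n : ℤ), ((Ψ g) n : B) = φ (g n : A) := by
    intro g
    induction g using DirectSum.induction_on with
    | zero => intro n; simp
    | of i x =>
      intro n
      rw [hΨof i x]
      rcases eq_or_ne i n with rfl | h
      · rw [DirectSum.of_eq_same, DirectSum.of_eq_same]; rfl
      · rw [DirectSum.of_eq_of_ne _ _ _ h.symm, DirectSum.of_eq_of_ne _ _ _ h.symm]; simp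
    | add x y hx hy =>
      intro n
      rw [map_add, DirectSum.add_apply, DirectSum.add_apply, AddSubgroup.coe_add,
        AddSubgroup.coe_add, map_add, hx, hy]
  have hcoe : ∀ (g : DirectSum ℤ fun i => 𝒜 i),
      DirectSum.coeAddMonoidHom ℬ (Ψ g) = φ (DirectSum.coeAddMonoidHom 𝒜 g) := by
    intro g
    induction g using DirectSum.induction_on with
    | zero => simp
    | of i x =>
      rw [hΨof i x, DirectSum.coeAddMonoidHom_of, DirectSum.coeAddMonoidHom_of]
      rfl
    | add x y hx hy =>
      rw [map_add, map_add, hx, hy, ← map_add, map_add (DirectSum.coeAddMonoidHom 𝒜) x y]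
  have h0 : Ψ f = 0 := hBdecomp.injective (by rw [hcoe, hc]; simp)
  intro n
  rw [← hcomp f n, h0]
  simp

set_option maxHeartbeats 1000000 in
set_option synthInstance.maxHeartbeats 400000 in
/-- Uniqueness theorem for strongly graded rings: if `A = ⊕_{n∈ℤ} A_n` is a
strongly `ℤ`-graded ring with graded local units, `B` is a `ℤ`-graded ring and
`φ : A → B` is a graded ring homomorphism whose restriction to `A_0` is
injective, then `φ` is injective. -/
theorem stmt3 {A B : Type*} [NonUnitalRing A] [NonUnitalRing B]
    (𝒜 : ℤ → AddSubgroup A) (ℬ : ℤ → AddSubgroup B)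
    (hAdecomp : DirectSum.IsInternal 𝒜)
    (hAmul : ∀ m n : ℤ, ∀ x ∈ 𝒜 m, ∀ y ∈ 𝒜 n, x * y ∈ 𝒜 (m + n))
    (hBdecomp : DirectSum.IsInternal ℬ)
    (hBmul : ∀ m n : ℤ, ∀ x ∈ ℬ m, ∀ y ∈ ℬ n, x * y ∈ ℬ (m + n))
    -- `A` is strongly graded
    (hstrong : ∀ m n : ℤ, subMul (𝒜 m) (𝒜 n) = 𝒜 (m + n))
    -- `A` has graded local units
    (hglu : ∀ s : Finset A, (∀ x ∈ s, ∃ n : ℤ, x ∈ 𝒜 n) →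
      ∃ e : A, (∃ n : ℤ, e ∈ 𝒜 n) ∧ e * e = e ∧ ∀ x ∈ s, ∃ a : A, x = e * a * e)
    (φ : A →ₙ+* B)
    (hgraded : ∀ n : ℤ, ∀ x ∈ 𝒜 n, φ x ∈ ℬ n)
    (hinj : Set.InjOn φ (𝒜 0 : Set A)) :
    Function.Injective φ := by
  classical
  -- Key: a homogeneous element in the kernel is zero.
  have key : ∀ n : ℤ, ∀ x ∈ 𝒜 n, φ x = 0 → x = 0 := by
    intro n x hx hφx
    obtain ⟨e, ⟨k, hek⟩, hee, hxe⟩ := hglu {x} (by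
      intro y hy; rw [Finset.mem_singleton] at hy; exact ⟨n, hy ▸ hx⟩)
    obtain ⟨a, hxa⟩ := hxe x (Finset.mem_singleton_self x)
    by_cases he0 : e = 0
    · rw [hxa, he0, zero_mul, zero_mul]
    -- e is a nonzero homogeneous idempotent, hence has degree 0
    have he2 : e ∈ 𝒜 (k + k) := hee ▸ hAmul k k e hek e hek
    have hk0 : k = 0 := by
      have hs : DirectSum.of (fun i => 𝒜 i) k ⟨e, hek⟩ =
          DirectSum.of (fun i => 𝒜 i) (k + k) ⟨e, he2⟩ := by
        apply hAdecomp.injective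
        rw [DirectSum.coeAddMonoidHom_of, DirectSum.coeAddMonoidHom_of]
      rcases (DFinsupp.single_eq_single_iff _ _ _ _).mp hs with ⟨h1, _⟩ | ⟨h1, _⟩
      · omega
      · exact absurd (congrArg Subtype.val h1) he0
    subst hk0
    -- all products v * x with v ∈ 𝒜 (-n) vanish
    have hvx : ∀ v ∈ 𝒜 (-n), v * x = 0 := by
      intro v hv
      have hmem : v * x ∈ 𝒜 0 := by
        have := hAmul (-n) n v hv x hx
        simpa using this
      apply hinj hmem (AddSubgroup.zero_mem _)
      simp [map_mul, hφx]
    -- hence c * x = 0 for all c ∈ subMul (𝒜 n) (𝒜 (-n)) = 𝒜 0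
    have hsub : ∀ c ∈ subMul (𝒜 n) (𝒜 (-n)), c * x = 0 := by
      intro c hc
      induction hc using AddSubgroup.closure_induction with
      | mem c hc =>
        obtain ⟨u, hu, v, hv, rfl⟩ := hc
        rw [mul_assoc, hvx v hv, mul_zero]
      | zero => exact zero_mul x
      | add c d _ _ hc hd => rw [add_mul, hc, hd, add_zero]
      | neg c _ hc => rw [neg_mul, hc, neg_zero]
    have hex : e * x = x := by
      rw [hxa, ← mul_assoc, ← mul_assoc, hee]
    have : e ∈ subMul (𝒜 n) (𝒜 (-n)) := by
      rw [hstrong n (-n)]; simpa using hek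
    rw [← hex, hsub e this]
  -- Reduce to elements of the kernel.
  have h0 : ∀ c : A, φ c = 0 → c = 0 := by
    intro c hc
    obtain ⟨f, rfl⟩ := hAdecomp.surjective c
    have hzero := auxCompZero 𝒜 ℬ hBdecomp φ hgraded f hc
    have : f = 0 := DFinsupp.ext fun n => Subtype.ext (key n (f n) (f n).2 (hzero n))
    rw [this, map_zero]
  intro a b hab
  have : φ (a - b) = 0 := by rw [map_sub, hab, sub_self]
  exact sub_eq_zero.mp (h0 _ this)
end

section
/- Let A = ⊕_{n∈ℤ} A_n be a strongly ℤ-graded ring with graded local units. If r ∈ A_0 satisfies rx = 0 for all x ∈ A_1, then r = 0; that is, ann_{A_0}(A_1) = {0}. -/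
/-- If `A = ⊕_{n∈ℤ} A_n` is a strongly `ℤ`-graded ring with graded local units,
then `ann_{A_0}(A_1) = {0}`: any `r ∈ A_0` with `r x = 0` for all `x ∈ A_1` is
zero. -/
theorem stmt4 {A : Type*} [NonUnitalRing A]
    (𝒜 : ℤ → AddSubgroup A)
    (hdecomp : DirectSum.IsInternal 𝒜)
    (hgmul : ∀ m n : ℤ, ∀ x ∈ 𝒜 m, ∀ y ∈ 𝒜 n, x * y ∈ 𝒜 (m + n))
    -- `A` is strongly graded
    (hstrong : ∀ m n : ℤ, subMul (𝒜 m) (𝒜 n) = 𝒜 (m + n))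
    -- `A` has graded local units
    (hglu : ∀ s : Finset A, (∀ x ∈ s, ∃ n : ℤ, x ∈ 𝒜 n) →
      ∃ e : A, (∃ n : ℤ, e ∈ 𝒜 n) ∧ e * e = e ∧ ∀ x ∈ s, ∃ a : A, x = e * a * e) :
    ∀ r ∈ 𝒜 0, (∀ x ∈ 𝒜 1, r * x = 0) → r = 0 := by
  intro r hr hann
  -- Step 1: r annihilates 𝒜 0, since 𝒜 0 = A_1 · A_{-1}.
  have h0 : ∀ x ∈ 𝒜 0, r * x = 0 := by
    intro x hx
    have hx' : x ∈ subMul (𝒜 1) (𝒜 (-1)) := by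
      rw [hstrong 1 (-1)]; norm_num at *; exact hx
    refine AddSubgroup.closure_induction ?_ ?_ ?_ ?_ hx'
    · rintro a ⟨u, hu, v, hv, rfl⟩
      rw [← mul_assoc, hann u hu, zero_mul]
    · rw [mul_zero]
    · intro a b _ _ ha hb; rw [mul_add, ha, hb, add_zero]
    · intro a _ ha; rw [mul_neg, ha, neg_zero]
  -- Step 2: graded local unit for r
  obtain ⟨e, ⟨n, hen⟩, hee, hloc⟩ := hglu {r} (by
    intro x hx; simp only [Finset.mem_singleton] at hx; exact ⟨0, hx ▸ hr⟩)
  obtain ⟨a, hra⟩ := hloc r (Finset.mem_singleton_self r)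
  -- r * e = r
  have hre : r * e = r := by
    rw [hra, mul_assoc, mul_assoc, hee, ← mul_assoc]
  by_cases hn : n = 0
  · exact hre ▸ h0 e (hn ▸ hen)
  · -- e is homogeneous of degree n and of degree 2n, so e = 0
    have he2 : e ∈ 𝒜 (n + n) := hee ▸ hgmul n n e hen e hen
    have hne : e = 0 := by
      have hinj := hdecomp.injective
      have h1 : DirectSum.coeAddMonoidHom 𝒜 (DirectSum.of (fun i => 𝒜 i) n ⟨e, hen⟩) = e :=
        DirectSum.coeAddMonoidHom_of 𝒜 n ⟨e, hen⟩
      have h2 : DirectSum.coeAddMonoidHom 𝒜 (DirectSum.of (fun i => 𝒜 i) (n + n) ⟨e, he2⟩) = e :=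
        DirectSum.coeAddMonoidHom_of 𝒜 (n + n) ⟨e, he2⟩
      have heq := hinj (h1.trans h2.symm)
      have := congrArg (fun f => (f n : A)) heq
      simpa [DirectSum.coe_of_apply, show ¬ (n + n = n) by omega] using this
    rw [hra, hne, mul_zero]
end

section
/- Let A = ⊕_{n∈ℤ} A_n be a strongly ℤ-graded ring with graded local units. Then for any finite subset {a_1,…,a_n} ⊆ A_1 there exists r ∈ A_1 A_{-1} such that r a_l = a_l for each 1 ≤ l ≤ n, and for any finite subset {b_1,…,b_m} ⊆ A_{-1} there exists s ∈ A_1 A_{-1} such that b_l s = b_l for each 1 ≤ l ≤ m. -/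
lemma eq_zero_of_mem_ne {A : Type*} [AddCommGroup A] (𝒜 : ℤ → AddSubgroup A)
    (h : DirectSum.IsInternal 𝒜) {i j : ℤ} (hij : i ≠ j) {x : A}
    (hi : x ∈ 𝒜 i) (hj : x ∈ 𝒜 j) : x = 0 := by
  have key : DirectSum.of (fun n => 𝒜 n) i ⟨x, hi⟩ = DirectSum.of (fun n => 𝒜 n) j ⟨x, hj⟩ := by
    apply h.injective
    simp [DirectSum.coeAddMonoidHom_of]
  have := congrArg (fun f => f i) key
  simp only [DirectSum.of_eq_same, DirectSum.of_eq_of_ne _ _ _ hij] at this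
  exact congrArg Subtype.val this

/-- If `A = ⊕_{n∈ℤ} A_n` is a strongly `ℤ`-graded ring with graded local units,
then any finite subset of `A_1` admits a left "local unit" from `A_1 A_{-1}`,
and any finite subset of `A_{-1}` admits a right "local unit" from `A_1 A_{-1}`. -/
theorem stmt5 {A : Type*} [NonUnitalRing A]
    (𝒜 : ℤ → AddSubgroup A)
    (hdecomp : DirectSum.IsInternal 𝒜)
    (hgmul : ∀ m n : ℤ, ∀ x ∈ 𝒜 m, ∀ y ∈ 𝒜 n, x * y ∈ 𝒜 (m + n))
    -- `A` is strongly graded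
    (hstrong : ∀ m n : ℤ, subMul (𝒜 m) (𝒜 n) = 𝒜 (m + n))
    -- `A` has graded local units
    (hglu : ∀ s : Finset A, (∀ x ∈ s, ∃ n : ℤ, x ∈ 𝒜 n) →
      ∃ e : A, (∃ n : ℤ, e ∈ 𝒜 n) ∧ e * e = e ∧ ∀ x ∈ s, ∃ a : A, x = e * a * e) :
    (∀ s : Finset A, (↑s : Set A) ⊆ (𝒜 1 : Set A) →
      ∃ r ∈ subMul (𝒜 1) (𝒜 (-1)), ∀ a ∈ s, r * a = a) ∧
    (∀ s : Finset A, (↑s : Set A) ⊆ (𝒜 (-1) : Set A) →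
      ∃ t ∈ subMul (𝒜 1) (𝒜 (-1)), ∀ b ∈ s, b * t = b) := by
  have hsub : subMul (𝒜 1) (𝒜 (-1)) = 𝒜 0 := by
    have := hstrong 1 (-1); simpa using this
  -- key: any homogeneous idempotent lies in `𝒜 0`
  have key : ∀ (s : Finset A) (n : ℤ), (↑s : Set A) ⊆ (𝒜 n : Set A) →
      ∃ e ∈ subMul (𝒜 1) (𝒜 (-1)), (e * e = e) ∧ ∀ x ∈ s, (e * x = x ∧ x * e = x) := by
    intro s n hs
    obtain ⟨e, ⟨k, hek⟩, hee, hx⟩ := hglu s (fun x hx => ⟨n, hs hx⟩)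
    have he0 : e ∈ 𝒜 0 := by
      by_cases hk : k = 0
      · exact hk ▸ hek
      · have : e = 0 :=
          eq_zero_of_mem_ne 𝒜 hdecomp (show k ≠ k + k by omega) hek
            (hee ▸ hgmul k k e hek e hek)
        rw [this]; exact (𝒜 0).zero_mem
    refine ⟨e, hsub ▸ he0, hee, fun x hxs => ?_⟩
    obtain ⟨a, rfl⟩ := hx x hxs
    constructor
    · calc e * (e * a * e) = (e * e) * a * e := by noncomm_ring
        _ = e * a * e := by rw [hee]
    · calc (e * a * e) * e = e * a * (e * e) := by noncomm_ring
        _ = e * a * e := by rw [hee]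
  constructor
  · intro s hs
    obtain ⟨e, hmem, _, h⟩ := key s 1 hs
    exact ⟨e, hmem, fun a ha => (h a ha).1⟩
  · intro s hs
    obtain ⟨e, hmem, _, h⟩ := key s (-1) hs
    exact ⟨e, hmem, fun b hb => (h b hb).2⟩
end
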